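/- Let A and B be associative rings with identity, f : A → B a ring homomorphism, and J a proper two-sided ideal of B. Assume J is semicommutative, i.e., for all a, b ∈ J, ab = 0 implies aJb = 0. If A is a weak Armendariz ring, then the amalgamation A⋈fJ is a weak Armendariz ring. -/

import Mathlib

open Polynomial

/-- A ring `R` is Armendariz if whenever `p * q = 0` for polynomials over `R`,
every product of a coefficient of `p` with a coefficient of `q` is zero. -/
def IsArmendariz (R : Type*) [Ring R] : Prop :=
  ∀ p q : R[X], p * q = 0 → ∀ i j : ℕ, p.coeff i * q.coeff j = 0

/-- A ring `R` is nil-Armendariz if whenever every coefficient of `p * q` is nilpotent,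
every product of a coefficient of `p` with a coefficient of `q` is nilpotent. -/
def IsNilArmendariz (R : Type*) [Ring R] : Prop :=
  ∀ p q : R[X], (∀ k : ℕ, IsNilpotent ((p * q).coeff k)) →
    ∀ i j : ℕ, IsNilpotent (p.coeff i * q.coeff j)

/-- A ring `R` is weak Armendariz if whenever `p * q = 0` for polynomials over `R`,
every product of a coefficient of `p` with a coefficient of `q` is nilpotent. -/
def IsWeakArmendariz (R : Type*) [Ring R] : Prop :=
  ∀ p q : R[X], p * q = 0 → ∀ i j : ℕ, IsNilpotent (p.coeff i * q.coeff j)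

/-- The amalgamation `A ⋈^f J = {(a, f a + j) | a ∈ A, j ∈ J}` of `A` and `B` along the
two-sided ideal `J` with respect to `f`, as a subring of `A × B`.  (A pair `(a, b)` has the
form `(a, f a + j)` with `j ∈ J` iff `b - f a ∈ J`.) -/
def amalgamation {A B : Type*} [Ring A] [Ring B] (f : A →+* B) (J : TwoSidedIdeal B) :
    Subring (A × B) where
  carrier := {p | p.2 - f p.1 ∈ J}
  zero_mem' := by simp [J.zero_mem]
  one_mem' := by simp [J.zero_mem]
  add_mem' := by
    intro x y hx hy
    have e : (x + y).2 - f ((x + y).1) = (x.2 - f x.1) + (y.2 - f y.1) := by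
      simp only [Prod.snd_add, Prod.fst_add, map_add]; abel
    show (x + y).2 - f ((x + y).1) ∈ J
    rw [e]; exact J.add_mem hx hy
  neg_mem' := by
    intro x hx
    have e : (-x).2 - f ((-x).1) = -(x.2 - f x.1) := by
      simp only [Prod.snd_neg, Prod.fst_neg, map_neg]; abel
    show (-x).2 - f ((-x).1) ∈ J
    rw [e]; exact J.neg_mem hx
  mul_mem' := by
    intro x y hx hy
    have e : (x * y).2 - f ((x * y).1) = x.2 * (y.2 - f y.1) + (x.2 - f x.1) * f y.1 := by
      simp only [Prod.snd_mul, Prod.fst_mul, map_mul, mul_sub, sub_mul]; abel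
    show (x * y).2 - f ((x * y).1) ∈ J
    rw [e]; exact J.add_mem (J.mul_mem_left _ _ hy) (J.mul_mem_right _ _ hx)

/-- The subring `f(A) + J = {f a + j | a ∈ A, j ∈ J}` of `B`.  (An element `b` has the form
`f a + j` with `j ∈ J` iff `b - f a ∈ J` for some `a`.) -/
def imageAddIdeal {A B : Type*} [Ring A] [Ring B] (f : A →+* B) (J : TwoSidedIdeal B) :
    Subring B where
  carrier := {b | ∃ a : A, b - f a ∈ J}
  zero_mem' := ⟨0, by simp [J.zero_mem]⟩
  one_mem' := ⟨1, by simp [J.zero_mem]⟩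
  add_mem' := by
    rintro x y ⟨a, ha⟩ ⟨b, hb⟩
    refine ⟨a + b, ?_⟩
    have e : x + y - f (a + b) = (x - f a) + (y - f b) := by
      rw [map_add]; abel
    rw [e]; exact J.add_mem ha hb
  neg_mem' := by
    rintro x ⟨a, ha⟩
    refine ⟨-a, ?_⟩
    have e : -x - f (-a) = -(x - f a) := by rw [map_neg]; abel
    rw [e]; exact J.neg_mem ha
  mul_mem' := by
    rintro x y ⟨a, ha⟩ ⟨b, hb⟩
    refine ⟨a * b, ?_⟩
    have e : x * y - f (a * b) = x * (y - f b) + (x - f a) * f b := by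
      rw [map_mul, mul_sub, sub_mul]; abel
    rw [e]; exact J.add_mem (J.mul_mem_left _ _ hb) (J.mul_mem_right _ _ ha)

section Machinery

variable {B : Type*} [Ring B] (J : TwoSidedIdeal B)

/-- `(a*b)^(n+1) = a * (b*a)^n * b`. -/
private lemma mul_pow_shift (a b : B) : ∀ n : ℕ, (a*b)^(n+1) = a * (b*a)^n * b
  | 0 => by simp [mul_assoc]
  | n+1 => by
    rw [pow_succ, mul_pow_shift a b n]
    simp only [pow_succ, mul_assoc]

private lemma pow_mem_J {x : B} (hx : x ∈ J) (r : ℕ) : x^(r+1) ∈ J := by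
  rw [pow_succ]
  exact J.mul_mem_left _ _ hx

/-- Insertion of an ideal element into powers of a nilpotent element of `J`. -/
private lemma E1 (hJsc : ∀ a ∈ J, ∀ b ∈ J, a * b = 0 → ∀ c ∈ J, a * c * b = 0) {x c : B} (hx : x ∈ J) (hc : c ∈ J) {m : ℕ} (hm : x^m = 0) :
    (x*c)^m = 0 := by
  have key : ∀ τ : ℕ, τ < m → x^(m-τ) * (c*x)^τ = 0 := by
    intro τ
    induction τ with
    | zero => intro _; simpa using hm
    | succ τ ih =>
      intro hτ
      have h1 : x^(m-τ) * (c*x)^τ = 0 := ih (by omega)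
      have e1 : m - τ = (m - (τ+1)) + 1 := by omega
      have hX : x^(m-(τ+1)) ∈ J := by
        have : m - (τ+1) = (m - (τ+1) - 1) + 1 := by omega
        rw [this]; exact pow_mem_J J hx _
      have hY : x * (c*x)^τ ∈ J := J.mul_mem_right _ _ hx
      have hXY : x^(m-(τ+1)) * (x * (c*x)^τ) = 0 := by
        rw [← mul_assoc, ← pow_succ]
        rw [e1] at h1; exact h1
      have := hJsc _ hX _ hY hXY c hc
      calc x^(m-(τ+1)) * (c*x)^(τ+1)
          = x^(m-(τ+1)) * c * (x * (c*x)^τ) := by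
            simp only [pow_succ, mul_assoc]
            congr 1
            rw [← pow_succ, pow_succ', mul_assoc]
      _ = 0 := this
  rcases Nat.eq_zero_or_pos m with hm0 | hm0
  · subst hm0; simpa using hm
  · obtain ⟨m', rfl⟩ : ∃ m', m = m' + 1 := ⟨m - 1, by omega⟩
    have := key m' (by omega)
    rw [mul_pow_shift]
    have : x * (c*x)^m' = 0 := by simpa using key m' (by omega)
    rw [show x * (c*x)^m' * c = (x * (c*x)^m') * c from rfl, this, zero_mul]

/-- Right multiplication preserves nilpotency of elements of `J`. -/
private lemma E2r (hJsc : ∀ a ∈ J, ∀ b ∈ J, a * b = 0 → ∀ c ∈ J, a * c * b = 0)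
    {x : B} (hx : x ∈ J) {m : ℕ} (hm : x^m = 0) (r : B) : (x*r)^(2*m) = 0 := by
  have hc : r*x*r ∈ J := J.mul_mem_right _ _ (J.mul_mem_left _ _ hx)
  have h2 : (x*r)^2 = x*(r*x*r) := by simp [pow_two, mul_assoc]
  rw [pow_mul, h2]
  exact E1 J hJsc hx hc hm

private lemma E2l (hJsc : ∀ a ∈ J, ∀ b ∈ J, a * b = 0 → ∀ c ∈ J, a * c * b = 0)
    {x : B} (hx : x ∈ J) {m : ℕ} (hm : x^m = 0) (r : B) : (r*x)^(2*m+1) = 0 := by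
  rw [mul_pow_shift, E2r J hJsc hx hm r, mul_zero, zero_mul]

/-- Nonempty products of elements of `J` are in `J`. -/
private lemma prod_mem_J {l : List B} (hne : l ≠ []) (hl : ∀ x ∈ l, x ∈ J) : l.prod ∈ J := by
  cases l with
  | nil => exact absurd rfl hne
  | cons x t =>
    rw [List.prod_cons]
    exact J.mul_mem_right _ _ (hl x (List.mem_cons_self))

/-- Key word-killing lemma. -/
private lemma WK3 [DecidableEq B]
    (hJsc : ∀ a ∈ J, ∀ b ∈ J, a * b = 0 → ∀ c ∈ J, a * c * b = 0)
    {j : B} (hj : j ∈ J) :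
    ∀ (l : List B), (∀ x ∈ l, x ∈ J) → ∀ r : ℕ, j^(r + l.count j) = 0 → j^r * l.prod = 0 := by
  classical
  intro l
  induction l with
  | nil => intro _ r hr; simpa using hr
  | cons x t ih =>
    intro hl r hr
    by_cases hx : x = j
    · have hcount : (x :: t).count j = t.count j + 1 := by simp [List.count_cons, hx]
      rw [hcount, show r + (t.count j + 1) = (r+1) + t.count j from by omega] at hr
      have ht : ∀ y ∈ t, y ∈ J := fun y hy => hl y (List.mem_cons_of_mem _ hy)
      have hIH : j^(r+1) * t.prod = 0 := ih ht (r+1) hr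
      rw [List.prod_cons, hx, ← mul_assoc, ← pow_succ]
      exact hIH
    · have hcount : (x :: t).count j = t.count j := by
        simp [List.count_cons, hx]
      rw [hcount] at hr
      have ht : ∀ y ∈ t, y ∈ J := fun y hy => hl y (List.mem_cons_of_mem _ hy)
      have hIH : j^r * t.prod = 0 := ih ht r hr
      rcases Nat.eq_zero_or_pos r with hr0 | hr0
      · subst hr0
        simp only [pow_zero, one_mul] at hIH ⊢
        rw [List.prod_cons, hIH, mul_zero]
      · rcases List.eq_nil_or_concat t with rfl | hne
        · simp only [List.count_nil, Nat.add_zero] at hr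
          rw [List.prod_cons, List.prod_nil, mul_one, hr, zero_mul]
        · have htne : t ≠ [] := by rcases hne with ⟨L, b, rfl⟩; simp [List.concat_eq_append]
          have htJ : t.prod ∈ J := prod_mem_J J htne ht
          have hXJ : j^r ∈ J := by
            obtain ⟨r', rfl⟩ : ∃ r', r = r' + 1 := ⟨r - 1, by omega⟩
            exact pow_mem_J J hj r'
          have := hJsc _ hXJ _ htJ hIH x (hl x (List.mem_cons_self))
          rw [List.prod_cons, ← mul_assoc]
          exact this

private lemma add_pow_words (a b : B) : ∀ L : ℕ,
    (a+b)^L = ∑ f : Fin L → Bool, (List.ofFn (fun i => cond (f i) a b)).prod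
  | 0 => by
    rw [pow_zero]
    rw [Finset.sum_eq_single_of_mem (fun _ => true) (Finset.mem_univ _)]
    · simp
    · intro g _ hg
      exact absurd (Subsingleton.elim g _) hg
  | L+1 => by
    rw [pow_succ', add_pow_words a b L]
    rw [← Equiv.sum_comp (Fin.consEquiv (fun _ : Fin (L+1) => Bool))
      (fun f => (List.ofFn (fun i => cond (f i) a b)).prod)]
    have hW : ∀ p : Bool × (Fin L → Bool),
        (List.ofFn (fun i => cond ((Fin.consEquiv (fun _ : Fin (L+1) => Bool)) p i) a b)).prod
        = cond p.1 a b * (List.ofFn (fun i => cond (p.2 i) a b)).prod := by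
      rintro ⟨c, g⟩
      have he : ((Fin.consEquiv (fun _ : Fin (L+1) => Bool)) (c, g)) = Fin.cons c g := by
        rfl
      rw [he, List.ofFn_succ]
      simp [Fin.cons_succ]
    rw [Finset.sum_congr rfl (fun p _ => hW p)]
    rw [Fintype.sum_prod_type]
    rw [Fintype.sum_bool]
    simp only [cond_true, cond_false, ← Finset.mul_sum]
    rw [add_mul]

private lemma length_le_counts [DecidableEq B] (a b : B) :
    ∀ l : List B, (∀ x ∈ l, x = a ∨ x = b) → l.length ≤ l.count a + l.count b := by
  intro l
  induction l with
  | nil => simp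
  | cons x t ih =>
    intro hl
    have ht := ih (fun y hy => hl y (List.mem_cons_of_mem _ hy))
    rcases hl x (List.mem_cons_self) with rfl | rfl <;>
      simp [List.count_cons] <;> omega

/-- Sum of two nilpotent elements of a semicommutative ideal is nilpotent. -/
private lemma E3 (hJsc : ∀ a ∈ J, ∀ b ∈ J, a * b = 0 → ∀ c ∈ J, a * c * b = 0)
    {x y : B} (hx : x ∈ J) (hy : y ∈ J) {m n : ℕ} (hxm : x^m = 0) (hyn : y^n = 0) :
    (x+y)^(m+n) = 0 := by
  classical
  rw [add_pow_words]
  apply Finset.sum_eq_zero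
  intro f _
  set l : List B := List.ofFn (fun i => cond (f i) x y) with hl
  have hmem : ∀ z ∈ l, z = x ∨ z = y := by
    intro z hz
    rw [hl, List.mem_ofFn] at hz
    obtain ⟨i, hi⟩ := hz
    cases h : f i
    · right; rw [← hi]; simp [h]
    · left; rw [← hi]; simp [h]
  have hmemJ : ∀ z ∈ l, z ∈ J := by
    intro z hz; rcases hmem z hz with rfl | rfl; exacts [hx, hy]
  have hlen : l.length = m + n := by simp [hl]
  by_cases hcx : m ≤ l.count x
  · have h0 : x ^ (0 + l.count x) = 0 := by
      rw [zero_add, show l.count x = m + (l.count x - m) from by omega, pow_add, hxm, zero_mul]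
    have := WK3 J hJsc hx l hmemJ 0 h0
    simpa using this
  · have hcy : n ≤ l.count y := by
      have := length_le_counts x y l hmem
      omega
    have h0 : y ^ (0 + l.count y) = 0 := by
      rw [zero_add, show l.count y = n + (l.count y - n) from by omega, pow_add, hyn, zero_mul]
    have := WK3 J hJsc hy l hmemJ 0 h0
    simpa using this

variable (hJsc : ∀ a ∈ J, ∀ b ∈ J, a * b = 0 → ∀ c ∈ J, a * c * b = 0)

/-- The set of nilpotent elements of `J`. -/
private def NJ : Set B := {x | x ∈ J ∧ IsNilpotent x}

private lemma NJ_zero : (0 : B) ∈ NJ J := ⟨J.zero_mem, IsNilpotent.zero⟩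

private lemma nilp_of_pow {x : B} {n : ℕ} (h : IsNilpotent (x^n)) : IsNilpotent x := by
  obtain ⟨q, hq⟩ := h
  exact ⟨n*q, by rw [pow_mul]; exact hq⟩

include hJsc

private lemma NJ_mul_right {x : B} (hx : x ∈ NJ J) (r : B) : x * r ∈ NJ J := by
  obtain ⟨hxJ, m, hm⟩ := hx
  exact ⟨J.mul_mem_right _ _ hxJ, ⟨2*m, E2r J hJsc hxJ hm r⟩⟩

private lemma NJ_mul_left {x : B} (hx : x ∈ NJ J) (r : B) : r * x ∈ NJ J := by
  obtain ⟨hxJ, m, hm⟩ := hx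
  exact ⟨J.mul_mem_left _ _ hxJ, ⟨2*m+1, E2l J hJsc hxJ hm r⟩⟩

private lemma NJ_add {x y : B} (hx : x ∈ NJ J) (hy : y ∈ NJ J) : x + y ∈ NJ J := by
  obtain ⟨hxJ, m, hm⟩ := hx
  obtain ⟨hyJ, n, hn⟩ := hy
  exact ⟨J.add_mem hxJ hyJ, ⟨m+n, E3 J hJsc hxJ hyJ hm hn⟩⟩

/-- If `a*b ∈ NJ` then `a*c*b ∈ NJ` for every `c ∈ J`. -/
private lemma P3 {a b : B} (hab : a * b ∈ NJ J) {c : B} (hc : c ∈ J) :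
    a * c * b ∈ NJ J := by
  set z := b * a with hz
  have hz2 : z * z ∈ NJ J := by
    have : z * z = b * (a * b) * a := by rw [hz]; simp only [mul_assoc]
    rw [this]
    exact NJ_mul_right J hJsc (NJ_mul_left J hJsc hab b) a
  have hzcz : z * c * z ∈ NJ J := by
    have hJm : z * c * z ∈ J := J.mul_mem_right _ _ (J.mul_mem_left _ _ hc)
    have hsq : (z*c*z) * (z*c*z) = z * c * (z*z) * (c * z) := by
      simp only [mul_assoc]
    have : (z*c*z) * (z*c*z) ∈ NJ J := by
      rw [hsq]
      exact NJ_mul_right J hJsc (NJ_mul_left J hJsc hz2 (z*c)) (c*z)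
    refine ⟨hJm, nilp_of_pow (n := 2) ?_⟩
    rw [pow_two]
    exact this.2
  have hy3 : (a*c*b)^3 = a * c * (z*c*z) * (c*b) := by
    rw [hz]; simp only [pow_succ, pow_zero, one_mul, mul_assoc]
  have h3 : (a*c*b)^3 ∈ NJ J :=
    hy3 ▸ NJ_mul_right J hJsc (NJ_mul_left J hJsc hzcz (a*c)) (c*b)
  exact ⟨J.mul_mem_right _ _ (J.mul_mem_left _ _ hc), nilp_of_pow (n := 3) h3.2⟩

/-- If `a*b` is nilpotent then `a*c*b ∈ NJ` for every `c ∈ J`. -/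
private lemma P4 {a b : B} (hab : IsNilpotent (a * b)) {c : B} (hc : c ∈ J) :
    a * c * b ∈ NJ J := by
  obtain ⟨R, hR⟩ := hab
  set z := b * a with hz
  have hzR : z ^ (R+1) = 0 := by
    rw [hz, mul_pow_shift, hR, mul_zero, zero_mul]
  -- z^(R+1-τ) * (c*z)^τ ∈ NJ for all τ ≤ R
  have key : ∀ τ : ℕ, τ ≤ R → z^(R+1-τ) * (c*z)^τ ∈ NJ J := by
    intro τ
    induction τ with
    | zero => intro _; simp only [Nat.sub_zero, pow_zero, mul_one]; rw [hzR]; exact NJ_zero J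
    | succ τ ih =>
      intro hτ
      have h1 := ih (by omega)
      have e1 : R + 1 - τ = (R - τ) + 1 := by omega
      have h1' : z^(R-τ) * (z * (c*z)^τ) ∈ NJ J := by
        rw [← mul_assoc, ← pow_succ, ← e1]; exact h1
      have := P3 J hJsc h1' hc
      have e2 : z^(R-τ) * c * (z * (c*z)^τ) = z^(R+1-(τ+1)) * (c*z)^(τ+1) := by
        have : R + 1 - (τ+1) = R - τ := by omega
        rw [this, pow_succ']
        simp only [mul_assoc]
      rwa [e2] at this
  have hfin : z * (c*z)^R ∈ NJ J := by
    have := key R le_rfl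
    simpa using this
  have hcz : (c*z)^(R+1) ∈ NJ J := by
    rw [pow_succ', mul_assoc]
    exact NJ_mul_left J hJsc hfin c
  have hpow : (a*c*b)^(R+2) = a * ((c*z)^(R+1) * (c * b)) := by
    have h1 : a*c*b = a*(c*b) := by rw [mul_assoc]
    rw [h1, mul_pow_shift a (c*b) (R+1)]
    have h2 : c * b * a = c * z := by rw [hz, mul_assoc]
    rw [h2]
    simp only [mul_assoc]
  have : (a*c*b)^(R+2) ∈ NJ J := by
    rw [hpow]
    exact NJ_mul_left J hJsc (NJ_mul_right J hJsc hcz (c*b)) a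
  exact ⟨J.mul_mem_right _ _ (J.mul_mem_left _ _ hc), nilp_of_pow (n := R+2) this.2⟩

private lemma NJ_sum {ι : Type*} (s : Finset ι) (g : ι → B)
    (h : ∀ u ∈ s, g u ∈ NJ J) : (∑ u ∈ s, g u) ∈ NJ J := by
  classical
  induction s using Finset.induction_on with
  | empty => simpa using NJ_zero J
  | insert a t hni ih =>
    rw [Finset.sum_insert hni]
    exact NJ_add J hJsc (h a (Finset.mem_insert_self a t))
      (ih (fun u hu => h u (Finset.mem_insert_of_mem hu)))

omit hJsc in
private lemma regroup1 (p q A B2 : B) (m e : ℕ) :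
    (p*q)^(m + 1 + e) * (A * B2) = (p*q)^m * ((p * (q * ((p*q)^e * A)) * B2)) := by
  rw [pow_add, pow_add, pow_one]
  simp only [mul_assoc]

omit hJsc in
private lemma regroup2 (Au Bu w A' B2 : B) :
    (Au * Bu) * (w * (A' * B2)) = Au * (Bu * (w * A')) * B2 := by
  simp only [mul_assoc]

/-- The nilpotents of `J` as a left submodule of `B`. -/
private def NSub : Submodule B B where
  carrier := NJ J
  add_mem' := fun hx hy => NJ_add J hJsc hx hy
  zero_mem' := NJ_zero J
  smul_mem' := fun c x hx => by simpa [smul_eq_mul] using NJ_mul_left J hJsc hx c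

private lemma core_step (P Q : B[X]) (hPQ : P * Q = 0) (i j k : ℕ) (hk : i + j = k)
    (hmemM : ∃ M' : ℕ, (P.coeff i * Q.coeff j)^(M'+1) ∈ J)
    (topIH : ∀ u v : ℕ, k < u + v → IsNilpotent (P.coeff u * Q.coeff v))
    (subIH : ∀ u v : ℕ, u + v = k → i < u → IsNilpotent (P.coeff u * Q.coeff v)) :
    IsNilpotent (P.coeff i * Q.coeff j) := by
  classical
  obtain ⟨M', hM⟩ := hmemM
  have hrel : ∑ u ∈ Finset.range (k+1), P.coeff u * Q.coeff (k-u) = 0 := by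
    have h0 : (P*Q).coeff k = 0 := by rw [hPQ]; simp
    rw [Polynomial.coeff_mul, Finset.Nat.sum_antidiagonal_eq_sum_range_succ_mk] at h0
    exact h0
  have hik : i ≤ k := by omega
  have hjk : j = k - i := by omega
  set t : B := P.coeff i * Q.coeff j with ht
  set U : Finset ℕ := (Finset.range (k+1)).erase i with hU
  set Y : B := ∑ u ∈ U, P.coeff u * Q.coeff (k-u) with hY
  have htY : t + Y = 0 := by
    have h3 := Finset.add_sum_erase (Finset.range (k+1))
      (fun u => P.coeff u * Q.coeff (k-u)) (Finset.mem_range.mpr (show i < k+1 by omega))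
    rw [hrel] at h3
    rw [ht, hY, hU, hjk]
    exact h3
  have htnegY : t = -Y := eq_neg_of_add_eq_zero_left htY
  have tJ : ∀ e : ℕ, M' + 1 ≤ e → t^e ∈ J := by
    intro e he
    rw [show e = (e - (M'+1)) + (M'+1) from by omega, pow_add]
    exact J.mul_mem_left _ _ hM
  set E : ℕ := 3*M'+2 with hE
  set X : B := t^E * Y with hX
  have hXpow : t^(E+1) = -X := by
    rw [pow_succ, hX, ← mul_neg]
    exact congrArg (t^E * ·) htnegY
  have kill1 : ∀ u' : ℕ, u' ≤ k → u' < i →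
      t^E * (P.coeff u' * Q.coeff (k-u')) ∈ NJ J := by
    intro u' hu'k hu'i
    have hflank : IsNilpotent (P.coeff i * Q.coeff (k-u')) := topIH i (k-u') (by omega)
    have hcJ : Q.coeff j * (t^(2*M'+1) * P.coeff u') ∈ J :=
      J.mul_mem_left _ _ (J.mul_mem_right _ _ (tJ (2*M'+1) (by omega)))
    have hP4 := P4 J hJsc hflank hcJ
    have heq : t^E * (P.coeff u' * Q.coeff (k-u'))
        = t^M' * (P.coeff i * (Q.coeff j * (t^(2*M'+1) * P.coeff u')) * Q.coeff (k-u')) := by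
      have h1 : t^E * (P.coeff u' * Q.coeff (k-u'))
          = (P.coeff i * Q.coeff j)^(M' + 1 + (2*M'+1)) * (P.coeff u' * Q.coeff (k-u')) := by
        rw [← ht, hE, show M' + 1 + (2*M'+1) = 3*M'+2 from by omega]
      rw [h1, regroup1, ← ht]
    rw [heq]
    exact NJ_mul_left J hJsc hP4 (t^M')
  have kill2 : ∀ u u' : ℕ, u ≤ k → u' ≤ k → i < u → u' ≤ u →
      (P.coeff u * Q.coeff (k-u)) * (t^E * (P.coeff u' * Q.coeff (k-u'))) ∈ NJ J := by
    intro u u' huk hu'k hiu hu'u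
    have hflank : IsNilpotent (P.coeff u * Q.coeff (k-u')) := by
      rcases eq_or_lt_of_le hu'u with rfl | hlt
      · exact subIH u' (k-u') (by omega) hiu
      · exact topIH u (k-u') (by omega)
    have hcJ : Q.coeff (k-u) * (t^E * P.coeff u') ∈ J :=
      J.mul_mem_left _ _ (J.mul_mem_right _ _ (tJ E (by omega)))
    have := P4 J hJsc hflank hcJ
    rw [regroup2]
    exact this
  set V : ℕ → Submodule B B := fun r => NSub J hJsc ⊔
    Submodule.span B {x : B | ∃ u : ℕ, i + r ≤ u ∧ u ≤ k ∧ x = P.coeff u * Q.coeff (k-u)}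
    with hV
  have NsubV : ∀ (r : ℕ), ∀ x ∈ NJ J, x ∈ V r := fun r x hx => Submodule.mem_sup_left hx
  have hmemU : ∀ u' ∈ U, u' ≤ k ∧ u' ≠ i := by
    intro u' hu'
    exact ⟨by have := Finset.mem_of_mem_erase hu'; rw [Finset.mem_range] at this; omega,
      Finset.ne_of_mem_erase hu'⟩
  have base : X ∈ V 1 := by
    rw [hX, hY, Finset.mul_sum]
    apply Submodule.sum_mem
    intro u' hu'
    obtain ⟨hu'k, hu'i⟩ := hmemU u' hu'
    rcases lt_or_gt_of_ne hu'i with hlt | hgt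
    · exact NsubV 1 _ (kill1 u' hu'k hlt)
    · refine Submodule.mem_sup_right ?_
      rw [show t^E * (P.coeff u' * Q.coeff (k-u'))
            = (t^E) • (P.coeff u' * Q.coeff (k-u')) from by rw [smul_eq_mul]]
      exact Submodule.smul_mem _ _ (Submodule.subset_span ⟨u', by omega, hu'k, rfl⟩)
  have step : ∀ r : ℕ, 1 ≤ r → ∀ x ∈ V r, x * X ∈ V (r+1) := by
    intro r hr x hx
    obtain ⟨nn, hnn, y, hy, rfl⟩ := Submodule.mem_sup.mp hx
    clear hx
    rw [add_mul]
    apply Submodule.add_mem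
    · exact NsubV _ _ (NJ_mul_right J hJsc hnn X)
    · clear hnn nn
      induction hy using Submodule.span_induction with
      | mem z hz =>
        obtain ⟨u, hu1, hu2, rfl⟩ := hz
        have expand : (P.coeff u * Q.coeff (k-u)) * X
            = ∑ u' ∈ U, (P.coeff u * Q.coeff (k-u)) * (t^E * (P.coeff u' * Q.coeff (k-u'))) := by
          rw [hX, hY, Finset.mul_sum, Finset.mul_sum]
        rw [expand]
        apply Submodule.sum_mem
        intro u' hu'
        obtain ⟨hu'k, hu'i⟩ := hmemU u' hu'
        rcases le_or_gt u' u with hle | hgt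
        · exact NsubV _ _ (kill2 u u' hu2 hu'k (by omega) hle)
        · refine Submodule.mem_sup_right ?_
          rw [show (P.coeff u * Q.coeff (k-u)) * (t^E * (P.coeff u' * Q.coeff (k-u')))
                = ((P.coeff u * Q.coeff (k-u)) * t^E) • (P.coeff u' * Q.coeff (k-u'))
              from by simp only [smul_eq_mul, mul_assoc]]
          exact Submodule.smul_mem _ _ (Submodule.subset_span ⟨u', by omega, hu'k, rfl⟩)
      | zero => simpa using Submodule.zero_mem _
      | add y1 y2 hy1 hy2 ih1 ih2 => rw [add_mul]; exact Submodule.add_mem _ ih1 ih2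
      | smul c y1 hy1 ih => rw [smul_mul_assoc]; exact Submodule.smul_mem _ _ ih
  have pows : ∀ r : ℕ, X^(r+1) ∈ V (r+1) := by
    intro r
    induction r with
    | zero => rw [pow_one]; exact base
    | succ r ih => rw [pow_succ]; exact step (r+1) (by omega) _ ih
  have hVtop : ∀ x ∈ V ((k-i)+1), x ∈ NJ J := by
    intro x hx
    obtain ⟨nn, hnn, y, hy, rfl⟩ := Submodule.mem_sup.mp hx
    have hempty : {x : B | ∃ u : ℕ, i + ((k-i)+1) ≤ u ∧ u ≤ k ∧ x = P.coeff u * Q.coeff (k-u)}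
        = (∅ : Set B) := by
      ext z
      simp only [Set.mem_setOf_eq, Set.mem_empty_iff_false, iff_false, not_exists]
      intro u
      rintro ⟨h1, h2, -⟩
      omega
    rw [hempty, Submodule.span_empty, Submodule.mem_bot] at hy
    rw [hy, add_zero]
    exact hnn
  have hXnil : IsNilpotent X := nilp_of_pow (n := (k-i)+1) (hVtop _ (pows (k-i))).2
  have h1 : IsNilpotent (t^(E+1)) := hXpow ▸ hXnil.neg
  exact nilp_of_pow h1

private lemma core (P Q : B[X]) (hPQ : P * Q = 0)
    (hmem : ∀ i j : ℕ, ∃ M' : ℕ, (P.coeff i * Q.coeff j)^(M'+1) ∈ J) :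
    ∀ i j : ℕ, IsNilpotent (P.coeff i * Q.coeff j) := by
  have main : ∀ c : ℕ, ∀ i j : ℕ, P.natDegree + Q.natDegree < i + j + c →
      IsNilpotent (P.coeff i * Q.coeff j) := by
    intro c
    induction c with
    | zero =>
      intro i j h
      have h0 : P.coeff i = 0 ∨ Q.coeff j = 0 := by
        rcases Nat.lt_or_ge P.natDegree i with h1 | h1
        · exact Or.inl (Polynomial.coeff_eq_zero_of_natDegree_lt h1)
        · exact Or.inr (Polynomial.coeff_eq_zero_of_natDegree_lt (by omega))
      rcases h0 with h0 | h0 <;> rw [h0] <;> simp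
    | succ c ihc =>
      intro i j h
      by_cases h' : P.natDegree + Q.natDegree < i + j + c
      · exact ihc i j h'
      · have inner : ∀ r : ℕ, ∀ i' j' : ℕ, i' + j' = i + j → i + j ≤ i' + r →
            IsNilpotent (P.coeff i' * Q.coeff j') := by
          intro r
          induction r with
          | zero =>
            intro i' j' hij hle
            exact core_step J hJsc P Q hPQ i' j' (i+j) hij (hmem i' j')
              (fun u v huv => ihc u v (by omega))
              (fun u v huv hu => by exfalso; omega)
          | succ r ihr =>
            intro i' j' hij hle
            by_cases h2 : i + j ≤ i' + r
            · exact ihr i' j' hij h2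
            · exact core_step J hJsc P Q hPQ i' j' (i+j) hij (hmem i' j')
                (fun u v huv => ihc u v (by omega))
                (fun u v huv hu => ihr u v huv (by omega))
        exact inner (i+j) i j rfl (by omega)
  intro i j
  exact main (P.natDegree + Q.natDegree + 1) i j (by omega)

omit hJsc in
private lemma powdiff {x y : B} (hxy : x - y ∈ J) {m : ℕ} (hy : y^m = 0) : x^m ∈ J := by
  have key : ∀ e : ℕ, x^e - y^e ∈ J := by
    intro e
    induction e with
    | zero => simpa using J.zero_mem
    | succ e ih =>
      have he : x^(e+1) - y^(e+1) = (x^e - y^e) * y + x^e * (x - y) := by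
        rw [pow_succ, pow_succ, sub_mul, mul_sub]
        abel
      rw [he]
      exact J.add_mem (J.mul_mem_right _ _ ih) (J.mul_mem_left _ _ hxy)
  have := key m
  rwa [hy, sub_zero] at this

end Machinery

private lemma nilp_succ {R : Type*} [Ring R] {z : R} (h : IsNilpotent z) :
    ∃ n : ℕ, z^(n+1) = 0 := by
  obtain ⟨q, hq⟩ := h
  cases q with
  | zero =>
    refine ⟨0, ?_⟩
    have h1 : (1 : R) = 0 := by simpa using hq
    calc z^1 = z * 1 := by rw [pow_one, mul_one]
    _ = z * 0 := by rw [h1]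
    _ = 0 := mul_zero z
  | succ n => exact ⟨n, hq⟩


theorem stmt_18 {A B : Type*} [Ring A] [Ring B] (f : A →+* B) (J : TwoSidedIdeal B)
    (hJ : (1 : B) ∉ J)
    (hJsc : ∀ a ∈ J, ∀ b ∈ J, a * b = 0 → ∀ c ∈ J, a * c * b = 0)
    (hA : IsWeakArmendariz A) :
    IsWeakArmendariz (amalgamation f J) := by
  intro p q hpq i j
  classical
  set πA : (amalgamation f J) →+* A := (RingHom.fst A B).comp (amalgamation f J).subtype with hπA
  set πB : (amalgamation f J) →+* B := (RingHom.snd A B).comp (amalgamation f J).subtype with hπB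
  have hmapA : (p.map πA) * (q.map πA) = 0 := by
    rw [← Polynomial.map_mul, hpq, Polynomial.map_zero]
  have hmapB : (p.map πB) * (q.map πB) = 0 := by
    rw [← Polynomial.map_mul, hpq, Polynomial.map_zero]
  have hAnil : ∀ i' j' : ℕ, IsNilpotent (πA (p.coeff i') * πA (q.coeff j')) := by
    intro i' j'
    have := hA (p.map πA) (q.map πA) hmapA i' j'
    rwa [Polynomial.coeff_map, Polynomial.coeff_map] at this
  have hmemJ : ∀ x : (amalgamation f J), πB x - f (πA x) ∈ J := fun x => x.2
  have hmem : ∀ i' j' : ℕ,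
      ∃ M' : ℕ, ((p.map πB).coeff i' * (q.map πB).coeff j')^(M'+1) ∈ J := by
    intro i' j'
    obtain ⟨n, hn⟩ := nilp_succ (hAnil i' j')
    have hy : (f (πA (p.coeff i')) * f (πA (q.coeff j')))^(n+1) = 0 := by
      rw [← map_mul, ← map_pow, hn, map_zero]
    have hdiff : (πB (p.coeff i')) * (πB (q.coeff j'))
        - f (πA (p.coeff i')) * f (πA (q.coeff j')) ∈ J := by
      have h1 := hmemJ (p.coeff i')
      have h2 := hmemJ (q.coeff j')
      have e : (πB (p.coeff i')) * (πB (q.coeff j'))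
          - f (πA (p.coeff i')) * f (πA (q.coeff j'))
          = πB (p.coeff i') * (πB (q.coeff j') - f (πA (q.coeff j')))
            + (πB (p.coeff i') - f (πA (p.coeff i'))) * f (πA (q.coeff j')) := by
        rw [mul_sub, sub_mul]; abel
      rw [e]
      exact J.add_mem (J.mul_mem_left _ _ h2) (J.mul_mem_right _ _ h1)
    refine ⟨n, ?_⟩
    rw [Polynomial.coeff_map, Polynomial.coeff_map]
    exact powdiff J hdiff hy
  have hBnil : IsNilpotent (πB (p.coeff i) * πB (q.coeff j)) := by
    have := core J hJsc (p.map πB) (q.map πB) hmapB hmem i j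
    rwa [Polynomial.coeff_map, Polynomial.coeff_map] at this
  obtain ⟨n1, h1⟩ := hAnil i j
  obtain ⟨n2, h2⟩ := hBnil
  refine ⟨n1 + n2, ?_⟩
  have hcoe : (((p.coeff i * q.coeff j) ^ (n1+n2) : (amalgamation f J)) : A × B) = 0 := by
    rw [SubmonoidClass.coe_pow]
    have hval : ((p.coeff i * q.coeff j : (amalgamation f J)) : A × B)
        = (πA (p.coeff i) * πA (q.coeff j), πB (p.coeff i) * πB (q.coeff j)) := rfl
    rw [hval, Prod.pow_mk]
    rw [pow_add, pow_add, h1, h2, zero_mul, mul_zero]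
    rfl
  apply Subtype.coe_injective
  simpa using hcoe
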